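/- Let n, r, d, m be natural numbers with 2 ≤ d and d+1 ≤ m ≤ n−1. Suppose H_1, …, H_r are proper subsets of {1,…,n} that are pairwise distinct and satisfy |H_{j1} ∩ H_{j2}| ≤ d−2 for all 1 ≤ j1 < j2 ≤ r. Then the number of m-element subsets S of {1,…,n} such that S ⊆ H_j for some j is at most C(n−1, m). -/

import Mathlib

theorem stmt_0 (n r d m : ℕ) (hd : 2 ≤ d) (hm1 : d + 1 ≤ m) (hm2 : m ≤ n - 1)
    (H : Fin r → Finset ℕ) (hprop : ∀ j, H j ⊂ Finset.range n)
    (hpair : ∀ j1 j2 : Fin r, j1 ≠ j2 →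
      H j1 ≠ H j2 ∧ (H j1 ∩ H j2).card ≤ d - 2) :
    (((Finset.range n).powersetCard m).filter
        (fun S => ∃ j : Fin r, S ⊆ H j)).card ≤ (n - 1).choose m := by
  classical
  have hx : ∀ j, ∃ y, y ∈ Finset.range n ∧ y ∉ H j := fun j => by
    obtain ⟨y, h1, h2⟩ := Finset.exists_of_ssubset (hprop j)
    exact ⟨y, h1, h2⟩
  choose x hx1 hx2 using hx
  have uniq : ∀ (j1 j2 : Fin r) (A : Finset ℕ), m - 2 ≤ A.card →
      A ⊆ H j1 → A ⊆ H j2 → j1 = j2 := by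
    intro j1 j2 A hA h1 h2
    by_contra hne
    have hc := (hpair j1 j2 hne).2
    have hAc : A.card ≤ (H j1 ∩ H j2).card :=
      Finset.card_le_card (Finset.subset_inter h1 h2)
    omega
  have hcard : ((Finset.range (n-1)).powersetCard m).card = (n-1).choose m := by
    rw [Finset.card_powersetCard, Finset.card_range]
  rw [← hcard]
  apply Finset.card_le_card_of_injOn
    (fun S => if h : (n - 1) ∈ S ∧ ∃ j : Fin r, S ⊆ H j then
      insert (x h.2.choose) (S.erase (n - 1)) else S)
  · intro S hS
    simp only [Finset.mem_coe, Finset.mem_filter, Finset.mem_powersetCard] at hS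
    obtain ⟨⟨hSsub, hScard⟩, hSex⟩ := hS
    simp only [Finset.mem_coe, Finset.mem_powersetCard]
    by_cases h : (n - 1) ∈ S
    · have hh : (n - 1) ∈ S ∧ ∃ j : Fin r, S ⊆ H j := ⟨h, hSex⟩
      rw [dif_pos hh]
      set j := hh.2.choose with hj
      have hSj : S ⊆ H j := hh.2.choose_spec
      have hxnS : x j ∉ S := fun hmem => hx2 j (hSj hmem)
      have hxne : x j ≠ n - 1 := fun he => hx2 j (he ▸ hSj h)
      constructor
      · intro a ha
        rcases Finset.mem_insert.mp ha with rfl | ha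
        · have := hx1 j
          simp only [Finset.mem_range] at this ⊢
          omega
        · have ha1 := Finset.mem_of_mem_erase ha
          have ha2 := Finset.ne_of_mem_erase ha
          have := hSsub ha1
          simp only [Finset.mem_range] at this ⊢
          omega
      · rw [Finset.card_insert_of_notMem (fun hc => hxnS (Finset.mem_of_mem_erase hc)),
          Finset.card_erase_of_mem h, hScard]
        omega
    · have hh : ¬((n - 1) ∈ S ∧ ∃ j : Fin r, S ⊆ H j) := fun hc => h hc.1
      rw [dif_neg hh]
      refine ⟨fun a ha => ?_, hScard⟩
      have h1 := hSsub ha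
      have hne : a ≠ n - 1 := fun he => h (he ▸ ha)
      simp only [Finset.mem_range] at h1 ⊢
      omega
  · intro S1 hS1 S2 hS2 heq
    simp only [Finset.mem_coe, Finset.mem_filter, Finset.mem_powersetCard] at hS1 hS2
    obtain ⟨⟨hS1sub, hS1card⟩, hS1ex⟩ := hS1
    obtain ⟨⟨hS2sub, hS2card⟩, hS2ex⟩ := hS2
    dsimp only at heq
    by_cases h1 : (n - 1) ∈ S1 <;> by_cases h2 : (n - 1) ∈ S2
    · -- both contain n-1
      have hh1 : (n - 1) ∈ S1 ∧ ∃ j : Fin r, S1 ⊆ H j := ⟨h1, hS1ex⟩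
      have hh2 : (n - 1) ∈ S2 ∧ ∃ j : Fin r, S2 ⊆ H j := ⟨h2, hS2ex⟩
      rw [dif_pos hh1, dif_pos hh2] at heq
      set j1 := hh1.2.choose with hj1
      set j2 := hh2.2.choose with hj2
      have hSj1 : S1 ⊆ H j1 := hh1.2.choose_spec
      have hSj2 : S2 ⊆ H j2 := hh2.2.choose_spec
      have hE1 : x j1 ∉ S1.erase (n - 1) :=
        fun hc => hx2 j1 (hSj1 (Finset.mem_of_mem_erase hc))
      have hE2 : x j2 ∉ S2.erase (n - 1) :=
        fun hc => hx2 j2 (hSj2 (Finset.mem_of_mem_erase hc))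
      have hjeq : j1 = j2 := by
        apply uniq j1 j2 ((S1.erase (n - 1)).erase (x j2))
        · have h3 : (S1.erase (n - 1)).card = m - 1 := by
            rw [Finset.card_erase_of_mem h1, hS1card]
          have h4 := Finset.pred_card_le_card_erase (s := S1.erase (n - 1)) (a := x j2)
          omega
        · exact fun a ha => hSj1 (Finset.mem_of_mem_erase (Finset.mem_of_mem_erase ha))
        · intro a ha
          have ha1 := Finset.mem_of_mem_erase ha
          have ha2 := Finset.ne_of_mem_erase ha
          have : a ∈ insert (x j2) (S2.erase (n - 1)) := by
            rw [← heq]; exact Finset.mem_insert_of_mem ha1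
          rcases Finset.mem_insert.mp this with he | hm
          · exact absurd he ha2
          · exact hSj2 (Finset.mem_of_mem_erase hm)
      rw [← hjeq] at heq hE2
      have hEeq : S1.erase (n - 1) = S2.erase (n - 1) := by
        have := congrArg (fun T => Finset.erase T (x j1)) heq
        simpa [Finset.erase_insert hE1, Finset.erase_insert hE2] using this
      have : insert (n - 1) (S1.erase (n - 1)) = insert (n - 1) (S2.erase (n - 1)) := by
        rw [hEeq]
      rwa [Finset.insert_erase h1, Finset.insert_erase h2] at this
    · -- n-1 ∈ S1, n-1 ∉ S2
      exfalso
      have hh1 : (n - 1) ∈ S1 ∧ ∃ j : Fin r, S1 ⊆ H j := ⟨h1, hS1ex⟩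
      have hh2 : ¬((n - 1) ∈ S2 ∧ ∃ j : Fin r, S2 ⊆ H j) := fun hc => h2 hc.1
      rw [dif_pos hh1, dif_neg hh2] at heq
      set j1 := hh1.2.choose with hj1
      have hSj1 : S1 ⊆ H j1 := hh1.2.choose_spec
      obtain ⟨k, hk⟩ := hS2ex
      have hjk : j1 = k := by
        apply uniq j1 k (S1.erase (n - 1))
        · rw [Finset.card_erase_of_mem h1, hS1card]; omega
        · exact fun a ha => hSj1 (Finset.mem_of_mem_erase ha)
        · intro a ha
          apply hk
          rw [← heq]
          exact Finset.mem_insert_of_mem ha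
      have : x j1 ∈ S2 := by
        rw [← heq]; exact Finset.mem_insert_self _ _
      have hmem := hk this; rw [← hjk] at hmem; exact hx2 j1 hmem
    · -- n-1 ∉ S1, n-1 ∈ S2
      exfalso
      have hh2 : (n - 1) ∈ S2 ∧ ∃ j : Fin r, S2 ⊆ H j := ⟨h2, hS2ex⟩
      have hh1 : ¬((n - 1) ∈ S1 ∧ ∃ j : Fin r, S1 ⊆ H j) := fun hc => h1 hc.1
      rw [dif_neg hh1, dif_pos hh2] at heq
      set j2 := hh2.2.choose with hj2
      have hSj2 : S2 ⊆ H j2 := hh2.2.choose_spec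
      obtain ⟨k, hk⟩ := hS1ex
      have hjk : j2 = k := by
        apply uniq j2 k (S2.erase (n - 1))
        · rw [Finset.card_erase_of_mem h2, hS2card]; omega
        · exact fun a ha => hSj2 (Finset.mem_of_mem_erase ha)
        · intro a ha
          apply hk
          rw [heq]
          exact Finset.mem_insert_of_mem ha
      have : x j2 ∈ S1 := by
        rw [heq]; exact Finset.mem_insert_self _ _
      have hmem := hk this; rw [← hjk] at hmem; exact hx2 j2 hmem
    · rw [dif_neg (fun hc => h1 hc.1), dif_neg (fun hc => h2 hc.1)] at heq
      exact heq
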